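/- Let (X, d, μ) be a proper metric measure space with polynomial volume growth rate ρ^V(X) < ∞ and volume noncollapsed, i.e., inf_{x∈X} μ(B_{1/2}(x)) > 0. Then the asymptotic dimension of X satisfies asdim(X) ≤ ⌊ρ^V(X)⌋. -/

import Mathlib

set_option linter.unusedSectionVars false
set_option maxHeartbeats 1000000

open Metric MeasureTheory Filter Set Topology
open scoped Classical ENNReal NNReal

namespace PolyGrowthAsdim

structure Ctx (X : Type*) [MetricSpace X] [MeasurableSpace X] where
  μ : Measure X
  d : ℕ → X
  Y : Set X
  r : ℝ
  R : ℝ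
  ε : ℝ
  M : ℕ

namespace Ctx

variable {X : Type*} [MetricSpace X] [MeasurableSpace X] [BorelSpace X] (c : Ctx X)

/-- width parameter -/
noncomputable def w : ℝ := c.r + 2

/-- candidate radii -/
noncomputable def aj (j : ℕ) : ℝ := c.R + 3 * c.w * j

def ann (Yk : Set X) (k j : ℕ) : Set X :=
  Yk ∩ (ball (c.d k) (c.aj j + c.w) \ ball (c.d k) (c.aj j - c.w))

def inn (Yk : Set X) (k j : ℕ) : Set X :=
  Yk ∩ ball (c.d k) (c.aj j - c.w - 2)

def good (Yk : Set X) (k j : ℕ) : Prop :=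
  1 ≤ j ∧ j ≤ c.M ∧
    c.μ (thickening 1 (c.ann Yk k j)) ≤ ENNReal.ofReal c.ε * c.μ (thickening 1 (c.inn Yk k j))

noncomputable def jp (Yk : Set X) (k : ℕ) : ℕ :=
  if h : ∃ j, c.good Yk k j then h.choose else 1

noncomputable def t (Yk : Set X) (k : ℕ) : ℝ := c.aj (c.jp Yk k)

def act (Yk : Set X) (k : ℕ) : Prop := (Yk ∩ ball (c.d k) 1).Nonempty

noncomputable def cell (k : ℕ) (Yk : Set X) : Set X :=
  if c.act Yk k then Yk ∩ ball (c.d k) (c.t Yk k) else ∅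

noncomputable def Yk : ℕ → Set X
  | 0 => c.Y
  | k + 1 => Yk k \ c.cell k (Yk k)

noncomputable def C (k : ℕ) : Set X := c.cell k (c.Yk k)

noncomputable def P (k : ℕ) : Set X :=
  {x ∈ c.C k | ∀ y ∈ c.Y, dist x y ≤ c.r → y ∈ c.C k}

noncomputable def Z : Set X := c.Y \ ⋃ k, c.P k

noncomputable def A' (k : ℕ) : Set X :=
  if c.act (c.Yk k) k then c.ann (c.Yk k) k (c.jp (c.Yk k) k) else ∅

noncomputable def Cin (k : ℕ) : Set X :=
  if c.act (c.Yk k) k then c.inn (c.Yk k) k (c.jp (c.Yk k) k) else ∅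

structure Hyp (c : Ctx X) (v Q : ℝ) : Prop where
  hr : 1 ≤ c.r
  hR : 8 * c.w ≤ c.R
  hM : c.M = ⌊(c.R - c.w) / (3 * c.w)⌋₊
  hQ : 1 ≤ Q
  hε : c.ε = Q ^ ((c.M : ℝ))⁻¹ - 1
  hv : 0 < v
  hvb : ∀ x : X, ENNReal.ofReal v ≤ c.μ (ball x (1 / 2))
  hd : DenseRange c.d
  hYb : ∀ z : X, c.μ (thickening 1 (c.Y ∩ ball z (3 * c.R))) ≤ ENNReal.ofReal (v * Q)

variable {c} {v Q : ℝ}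

lemma hw3 (h : Hyp c v Q) : 3 ≤ c.w := by
  have := h.hr; unfold w; linarith

lemma hw0 (h : Hyp c v Q) : 0 < c.w := lt_of_lt_of_le (by norm_num) (hw3 h)

lemma hR24 (h : Hyp c v Q) : 24 ≤ c.R := le_trans (by nlinarith [hw3 h]) h.hR

lemma hR0 (h : Hyp c v Q) : 0 < c.R := lt_of_lt_of_le (by norm_num) (hR24 h)

lemma hM2 (h : Hyp c v Q) : 2 ≤ c.M := by
  rw [h.hM]
  apply Nat.le_floor
  rw [le_div_iff₀ (by nlinarith [hw0 h])]
  push_cast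
  nlinarith [hw3 h, h.hR, hw0 h]

lemma hM0 (h : Hyp c v Q) : (c.M : ℝ) ≠ 0 := by
  have h2 := hM2 h
  have : c.M ≠ 0 := by omega
  exact_mod_cast Nat.cast_ne_zero.mpr this

lemma hε0 (h : Hyp c v Q) : 0 ≤ c.ε := by
  rw [h.hε]
  have : (1:ℝ) ≤ Q ^ ((c.M : ℝ))⁻¹ := Real.one_le_rpow h.hQ (by positivity)
  linarith

lemma h3wM (h : Hyp c v Q) : 3 * c.w * c.M ≤ c.R - c.w := by
  have hw := hw0 h
  have h1 : (c.M : ℝ) ≤ (c.R - c.w) / (3 * c.w) := by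
    rw [h.hM]
    exact Nat.floor_le (div_nonneg (by linarith [h.hR]) (by linarith))
  rw [le_div_iff₀ (by linarith)] at h1
  linarith

lemma hjp_le (h : Hyp c v Q) (Yk : Set X) (k : ℕ) : c.jp Yk k ≤ c.M := by
  unfold jp
  split
  · next hex => exact hex.choose_spec.2.1
  · exact le_trans (by norm_num) (hM2 h)

lemma ht_lb (h : Hyp c v Q) (Yk : Set X) (k : ℕ) : c.R ≤ c.t Yk k := by
  have hw := hw0 h
  have hj : (0:ℝ) ≤ (c.jp Yk k : ℝ) := Nat.cast_nonneg _
  unfold t aj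
  nlinarith

lemma ht_ub (h : Hyp c v Q) (Yk : Set X) (k : ℕ) : c.t Yk k ≤ 2 * c.R - c.w := by
  have h1 : (c.jp Yk k : ℝ) ≤ (c.M : ℝ) := by exact_mod_cast hjp_le h Yk k
  have h2 := h3wM h
  have hw := hw0 h
  unfold t aj
  nlinarith

lemma Yk_succ (k : ℕ) : c.Yk (k + 1) = c.Yk k \ c.C k := rfl

lemma Yk_sub_succ (k : ℕ) : c.Yk (k + 1) ⊆ c.Yk k := diff_subset

lemma Yk_anti : ∀ {k l : ℕ}, k ≤ l → c.Yk l ⊆ c.Yk k := by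
  intro k l h
  exact antitone_nat_of_succ_le (fun n => Yk_sub_succ n) h

lemma Yk_sub_Y (k : ℕ) : c.Yk k ⊆ c.Y := Yk_anti (Nat.zero_le k)

lemma C_sub_Yk (k : ℕ) : c.C k ⊆ c.Yk k := by
  unfold C cell
  split
  · exact inter_subset_left
  · exact empty_subset _

lemma notC_of_mem_Yk {x : X} {k l : ℕ} (hx : x ∈ c.Yk l) (hkl : k < l) : x ∉ c.C k := by
  intro hC
  have : x ∈ c.Yk (k + 1) := Yk_anti hkl hx
  rw [Yk_succ] at this
  exact this.2 hC

lemma C_eq_of_mem {x : X} {k l : ℕ} (hk : x ∈ c.C k) (hl : x ∈ c.C l) : k = l := by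
  rcases lt_trichotomy k l with h | h | h
  · exact absurd hk (notC_of_mem_Yk (C_sub_Yk l hl) h)
  · exact h
  · exact absurd hl (notC_of_mem_Yk (C_sub_Yk k hk) h)

lemma mem_Yk_of_not {x : X} (hx : x ∈ c.Y) : ∀ {k : ℕ}, (∀ j, j < k → x ∉ c.C j) → x ∈ c.Yk k := by
  intro k
  induction k with
  | zero => intro _; exact hx
  | succ k ih =>
    intro hnot
    rw [Yk_succ]
    exact ⟨ih (fun j hj => hnot j (Nat.lt_succ_of_lt hj)), hnot k (Nat.lt_succ_self k)⟩


lemma inn_sub3R (h : Hyp c v Q) {k j : ℕ} (hj : j ≤ c.M + 1) :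
    c.inn (c.Yk k) k j ⊆ c.Y ∩ ball (c.d k) (3 * c.R) := by
  rintro x ⟨hx1, hx2⟩
  refine ⟨Yk_sub_Y _ hx1, ?_⟩
  rw [mem_ball] at hx2 ⊢
  have hj' : (j : ℝ) ≤ (c.M : ℝ) + 1 := by exact_mod_cast hj
  have h1 := h3wM h
  have h2 := hw0 h
  have h3 := h.hR
  unfold aj at hx2
  nlinarith [mul_le_mul_of_nonneg_left hj' (by linarith : (0:ℝ) ≤ 3 * c.w)]

lemma good_exists (h : Hyp c v Q) (k : ℕ) (hak : c.act (c.Yk k) k) :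
    ∃ j, c.good (c.Yk k) k j := by
  by_contra hno
  push_neg at hno
  have hstrict : ∀ j, 1 ≤ j → j ≤ c.M →
      ENNReal.ofReal c.ε * c.μ (thickening 1 (c.inn (c.Yk k) k j)) <
        c.μ (thickening 1 (c.ann (c.Yk k) k j)) := by
    intro j h1 h2
    by_contra hle
    exact hno j ⟨h1, h2, not_lt.mp hle⟩
  set g : ℕ → ℝ≥0∞ := fun j => c.μ (thickening 1 (c.inn (c.Yk k) k j)) with hgdef
  have hg_top : ∀ j, j ≤ c.M + 1 → g j ≤ ENNReal.ofReal (v * Q) := by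
    intro j hj
    exact le_trans (measure_mono (thickening_subset_of_subset 1 (inn_sub3R h hj)))
      (h.hYb (c.d k))
  have hg_ne : ∀ j, j ≤ c.M + 1 → g j ≠ ⊤ :=
    fun j hj => (lt_of_le_of_lt (hg_top j hj) ENNReal.ofReal_lt_top).ne
  obtain ⟨p, hpY, hpb⟩ := hak
  have hgv : ENNReal.ofReal v ≤ g 1 := by
    have hp1 : p ∈ c.inn (c.Yk k) k 1 := by
      refine ⟨hpY, ?_⟩
      rw [mem_ball] at hpb ⊢
      have h1 := hw3 h
      have h2 := hR24 h
      unfold aj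
      push_cast
      nlinarith
    calc ENNReal.ofReal v ≤ c.μ (ball p (1/2)) := h.hvb p
      _ ≤ c.μ (ball p 1) := measure_mono (ball_subset_ball (by norm_num))
      _ ≤ g 1 := measure_mono (ball_subset_thickening hp1 1)
  have heps : ENNReal.ofReal (1 + c.ε) = 1 + ENNReal.ofReal c.ε := by
    rw [ENNReal.ofReal_add (by norm_num) (hε0 h), ENNReal.ofReal_one]
  have hstep : ∀ j, 1 ≤ j → j ≤ c.M → (1 + ENNReal.ofReal c.ε) * g j < g (j + 1) := by
    intro j h1 hM'
    have hdisj : Disjoint (thickening 1 (c.inn (c.Yk k) k j))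
        (thickening 1 (c.ann (c.Yk k) k j)) := by
      rw [Set.disjoint_left]
      intro u hu1 hu2
      obtain ⟨x, hx, hdx⟩ := mem_thickening_iff.mp hu1
      obtain ⟨y, hy, hdy⟩ := mem_thickening_iff.mp hu2
      obtain ⟨-, hx2⟩ := hx
      obtain ⟨-, hy2⟩ := hy
      rw [mem_ball] at hx2
      have hy3 : c.aj j - c.w ≤ dist y (c.d k) :=
        not_lt.mp (fun hc => hy2.2 (mem_ball.mpr hc))
      have hw := hw0 h
      have t1 := dist_triangle y u x
      have t2 : dist y u = dist u y := dist_comm y u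
      have t3 := dist_triangle y x (c.d k)
      linarith
    have hone : thickening 1 (c.inn (c.Yk k) k j) ∪ thickening 1 (c.ann (c.Yk k) k j)
        ⊆ thickening 1 (c.inn (c.Yk k) k (j + 1)) := by
      rw [← thickening_union]
      apply thickening_subset_of_subset
      apply union_subset
      · rintro x ⟨hx1, hx2⟩
        refine ⟨hx1, ball_subset_ball ?_ hx2⟩
        unfold aj
        push_cast
        nlinarith [hw0 h]
      · rintro x ⟨hx1, hx2⟩
        refine ⟨hx1, ball_subset_ball ?_ hx2.1⟩
        have := hw3 h
        unfold aj
        push_cast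
        nlinarith
    have hsum : g j + c.μ (thickening 1 (c.ann (c.Yk k) k j)) ≤ g (j + 1) := by
      rw [← measure_union hdisj isOpen_thickening.measurableSet]
      exact measure_mono hone
    have hlt : g j + ENNReal.ofReal c.ε * g j
        < g j + c.μ (thickening 1 (c.ann (c.Yk k) k j)) :=
      ENNReal.add_lt_add_left (hg_ne j (by omega)) (hstrict j h1 hM')
    calc (1 + ENNReal.ofReal c.ε) * g j = g j + ENNReal.ofReal c.ε * g j := by
          rw [add_mul, one_mul]
      _ < g j + c.μ (thickening 1 (c.ann (c.Yk k) k j)) := hlt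
      _ ≤ g (j + 1) := hsum
  have key : ∀ j, 1 ≤ j → j ≤ c.M → ENNReal.ofReal ((1 + c.ε) ^ j * v) < g (j + 1) := by
    intro j
    induction j with
    | zero => intro h0; exact absurd h0 (by norm_num)
    | succ j ih =>
      intro _ hjM
      rcases Nat.eq_zero_or_pos j with rfl | hj1
      · have h1 : ENNReal.ofReal ((1 + c.ε) ^ (0 + 1) * v) ≤ (1 + ENNReal.ofReal c.ε) * g 1 := by
          rw [zero_add, pow_one, ENNReal.ofReal_mul (by linarith [hε0 h]), heps]
          exact mul_le_mul' le_rfl hgv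
        exact lt_of_le_of_lt h1 (hstep 1 le_rfl hjM)
      · have ihh := ih hj1 (by omega)
        have h2 : ENNReal.ofReal ((1 + c.ε) ^ (j + 1) * v)
            = ENNReal.ofReal (1 + c.ε) * ENNReal.ofReal ((1 + c.ε) ^ j * v) := by
          rw [← ENNReal.ofReal_mul (show (0:ℝ) ≤ 1 + c.ε by linarith [hε0 h])]
          congr 1
          rw [pow_succ]
          ring
        have h3 : ENNReal.ofReal (1 + c.ε) * ENNReal.ofReal ((1 + c.ε) ^ j * v)
            < ENNReal.ofReal (1 + c.ε) * g (j + 1) :=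
          ENNReal.mul_lt_mul_right (ENNReal.ofReal_pos.mpr (by linarith [hε0 h])).ne'
            ENNReal.ofReal_ne_top ihh
        have h4 : ENNReal.ofReal (1 + c.ε) * g (j + 1) < g (j + 2) := by
          rw [heps]
          exact hstep (j + 1) (by omega) hjM
        rw [h2]
        exact lt_trans h3 h4
  have hfin := key c.M (by have := hM2 h; omega) le_rfl
  have hQM : (1 + c.ε) ^ c.M = Q := by
    have h1 : 1 + c.ε = Q ^ ((c.M : ℝ))⁻¹ := by rw [h.hε]; ring
    rw [h1, ← Real.rpow_natCast (Q ^ ((c.M : ℝ))⁻¹) c.M,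
      ← Real.rpow_mul (by linarith [h.hQ] : (0:ℝ) ≤ Q), inv_mul_cancel₀ (hM0 h), Real.rpow_one]
  rw [hQM, mul_comm] at hfin
  exact lt_irrefl _ (lt_of_lt_of_le hfin (hg_top (c.M + 1) le_rfl))

lemma good_spec (h : Hyp c v Q) {k : ℕ} (hak : c.act (c.Yk k) k) :
    c.good (c.Yk k) k (c.jp (c.Yk k) k) := by
  have hex := good_exists h k hak
  unfold jp
  rw [dif_pos hex]
  exact hex.choose_spec

lemma C_eq {k : ℕ} (hak : c.act (c.Yk k) k) :
    c.C k = c.Yk k ∩ ball (c.d k) (c.t (c.Yk k) k) := by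
  unfold C cell
  rw [if_pos hak]

lemma C_empty {k : ℕ} (hak : ¬ c.act (c.Yk k) k) : c.C k = ∅ := by
  unfold C cell
  rw [if_neg hak]

lemma act_of_C_nonempty {k : ℕ} {x : X} (hx : x ∈ c.C k) : c.act (c.Yk k) k := by
  by_contra hna
  rw [C_empty hna] at hx
  exact hx

lemma cover (h : Hyp c v Q) : c.Y ⊆ ⋃ k, c.C k := by
  intro x hx
  by_contra hnx
  have hnot : ∀ k, x ∉ c.C k := fun k hk => hnx (mem_iUnion.mpr ⟨k, hk⟩)
  have hxk : ∀ k, x ∈ c.Yk k := fun k => mem_Yk_of_not hx (fun j _ => hnot j)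
  obtain ⟨k, hk⟩ := h.hd.exists_dist_lt x one_pos
  have hak : c.act (c.Yk k) k := ⟨x, hxk k, mem_ball.mpr hk⟩
  apply hnot k
  rw [C_eq hak]
  refine ⟨hxk k, mem_ball.mpr (lt_of_lt_of_le hk ?_)⟩
  exact le_trans (by linarith [hR24 h]) (ht_lb h (c.Yk k) k)

lemma P_sub_C (k : ℕ) : c.P k ⊆ c.C k := fun _ hx => hx.1

lemma P_sub_Y (k : ℕ) : c.P k ⊆ c.Y := fun x hx => Yk_sub_Y _ (C_sub_Yk _ hx.1)

lemma P_sep (k l : ℕ) (hkl : k ≠ l) :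
    ∀ a ∈ c.P k, ∀ b ∈ c.P l, c.r < dist a b := by
  intro a ha b hb
  by_contra hle
  push_neg at hle
  have hbY : b ∈ c.Y := P_sub_Y l hb
  have hbCk : b ∈ c.C k := ha.2 b hbY hle
  exact hkl (C_eq_of_mem hbCk hb.1)

lemma P_bdd (h : Hyp c v Q) (k : ℕ) :
    ∀ a ∈ c.P k, ∀ b ∈ c.P k, dist a b ≤ 4 * c.R := by
  intro a ha b hb
  have hak : c.act (c.Yk k) k := act_of_C_nonempty ha.1
  have ha' := ha.1
  have hb' := hb.1
  rw [C_eq hak] at ha' hb'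
  have h1 : dist a (c.d k) < c.t (c.Yk k) k := mem_ball.mp ha'.2
  have h2 : dist b (c.d k) < c.t (c.Yk k) k := mem_ball.mp hb'.2
  have h3 := ht_ub h (c.Yk k) k
  have h4 := hw0 h
  have t1 := dist_triangle a (c.d k) b
  have t2 : dist (c.d k) b = dist b (c.d k) := dist_comm _ _
  linarith

lemma Y_sub_ZP : c.Y ⊆ c.Z ∪ ⋃ k, c.P k := by
  intro x hx
  by_cases hp : x ∈ ⋃ k, c.P k
  · exact Or.inr hp
  · exact Or.inl ⟨hx, hp⟩

lemma Z_sub_A' (h : Hyp c v Q) : c.Z ⊆ ⋃ k, c.A' k := by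
  rintro x ⟨hxY, hxP⟩
  obtain ⟨k0, hk0⟩ := mem_iUnion.mp (cover h hxY)
  have hnx : x ∉ c.P k0 := fun hp => hxP (mem_iUnion.mpr ⟨k0, hp⟩)
  have hex : ∃ y ∈ c.Y, dist x y ≤ c.r ∧ y ∉ c.C k0 := by
    by_contra hcon
    push_neg at hcon
    exact hnx ⟨hk0, fun y hy hd => hcon y hy hd⟩
  obtain ⟨y, hyY, hdxy, hyC⟩ := hex
  obtain ⟨l, hl⟩ := mem_iUnion.mp (cover h hyY)
  have hkl : l ≠ k0 := fun he => hyC (he ▸ hl)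
  have hw := hw0 h
  rcases lt_or_gt_of_ne hkl with hlt | hgt
  · -- l < k0 : x lies in the outer annulus of cell l
    have hactl : c.act (c.Yk l) l := act_of_C_nonempty hl
    refine mem_iUnion.mpr ⟨l, ?_⟩
    unfold A'
    rw [if_pos hactl]
    have hxYkl : x ∈ c.Yk l := Yk_anti (le_of_lt hlt) (C_sub_Yk k0 hk0)
    have hxnotCl : x ∉ c.C l := notC_of_mem_Yk (C_sub_Yk k0 hk0) hlt
    have hyball : dist y (c.d l) < c.t (c.Yk l) l := by
      have := hl
      rw [C_eq hactl] at this
      exact mem_ball.mp this.2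
    have hxout : ¬ dist x (c.d l) < c.t (c.Yk l) l := by
      intro hc
      exact hxnotCl (by rw [C_eq hactl]; exact ⟨hxYkl, mem_ball.mpr hc⟩)
    push_neg at hxout
    refine ⟨hxYkl, mem_ball.mpr ?_, fun hc => ?_⟩
    · have t1 := dist_triangle x y (c.d l)
      show dist x (c.d l) < c.aj (c.jp (c.Yk l) l) + c.w
      have : c.t (c.Yk l) l = c.aj (c.jp (c.Yk l) l) := rfl
      unfold w at *
      linarith [this ▸ hyball]
    · rw [mem_ball] at hc
      have : c.t (c.Yk l) l = c.aj (c.jp (c.Yk l) l) := rfl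
      rw [← this] at hc
      linarith
  · -- k0 < l : x lies in the outer annulus of its own cell k0
    have hact0 : c.act (c.Yk k0) k0 := act_of_C_nonempty hk0
    refine mem_iUnion.mpr ⟨k0, ?_⟩
    unfold A'
    rw [if_pos hact0]
    have hx0 := hk0
    rw [C_eq hact0] at hx0
    have hyYk0 : y ∈ c.Yk k0 := Yk_anti (le_of_lt hgt) (C_sub_Yk l hl)
    have hynotC : y ∉ c.C k0 := hyC
    have hyout : ¬ dist y (c.d k0) < c.t (c.Yk k0) k0 := by
      intro hcon
      exact hynotC (by rw [C_eq hact0]; exact ⟨hyYk0, mem_ball.mpr hcon⟩)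
    push_neg at hyout
    refine ⟨hx0.1, mem_ball.mpr ?_, fun hc => ?_⟩
    · have : c.t (c.Yk k0) k0 = c.aj (c.jp (c.Yk k0) k0) := rfl
      have h1 : dist x (c.d k0) < c.t (c.Yk k0) k0 := mem_ball.mp hx0.2
      unfold w at *
      linarith [this ▸ h1]
    · rw [mem_ball] at hc
      have heq : c.t (c.Yk k0) k0 = c.aj (c.jp (c.Yk k0) k0) := rfl
      rw [← heq] at hc
      have t1 := dist_triangle y x (c.d k0)
      have t2 : dist y x = dist x y := dist_comm _ _
      unfold w at *
      linarith

lemma A'_bound (h : Hyp c v Q) (k : ℕ) :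
    c.μ (thickening 1 (c.A' k)) ≤ ENNReal.ofReal c.ε * c.μ (thickening 1 (c.Cin k)) := by
  unfold A' Cin
  by_cases hak : c.act (c.Yk k) k
  · rw [if_pos hak, if_pos hak]
    exact (good_spec h hak).2.2
  · rw [if_neg hak, if_neg hak]
    simp

lemma Cin_sub (k : ℕ) :
    c.Cin k ⊆ c.Yk k ∩ ball (c.d k) (c.t (c.Yk k) k - c.w - 2) := by
  unfold Cin
  split
  · exact fun x hx => hx
  · exact empty_subset _

lemma Cin_thick_disj (h : Hyp c v Q) {k l : ℕ} (hkl : k < l) :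
    Disjoint (thickening 1 (c.Cin k)) (thickening 1 (c.Cin l)) := by
  rw [Set.disjoint_left]
  intro u hu1 hu2
  obtain ⟨x, hx, hdx⟩ := mem_thickening_iff.mp hu1
  obtain ⟨x', hx', hdx'⟩ := mem_thickening_iff.mp hu2
  have hactk : c.act (c.Yk k) k := by
    by_contra hna
    unfold Cin at hx
    rw [if_neg hna] at hx
    exact hx
  have hx2 := Cin_sub k hx
  have hx'2 := Cin_sub l hx'
  have hx'Yk : x' ∈ c.Yk k := Yk_anti (le_of_lt hkl) hx'2.1
  have hx'notC : x' ∉ c.C k := notC_of_mem_Yk hx'2.1 hkl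
  have hx'out : ¬ dist x' (c.d k) < c.t (c.Yk k) k := by
    intro hcon
    exact hx'notC (by rw [C_eq hactk]; exact ⟨hx'Yk, mem_ball.mpr hcon⟩)
  push_neg at hx'out
  have hxball : dist x (c.d k) < c.t (c.Yk k) k - c.w - 2 := mem_ball.mp hx2.2
  have hw := hw0 h
  have t1 := dist_triangle x' u x
  have t2 : dist x' u = dist u x' := dist_comm _ _
  have t3 := dist_triangle x' x (c.d k)
  have t4 : dist x' x ≤ dist x' u + dist u x := dist_triangle _ _ _
  linarith

lemma Cin_mass (h : Hyp c v Q) (k : ℕ) :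
    c.μ (thickening 1 (c.Cin k)) ≤ ENNReal.ofReal (v * Q) := by
  refine le_trans (measure_mono (thickening_subset_of_subset 1 ?_)) (h.hYb (c.d k))
  intro x hx
  have hx2 := Cin_sub k hx
  refine ⟨Yk_sub_Y _ hx2.1, ?_⟩
  have h1 : dist x (c.d k) < c.t (c.Yk k) k - c.w - 2 := mem_ball.mp hx2.2
  have h2 := ht_ub h (c.Yk k) k
  have h3 := hR0 h
  have hw := hw0 h
  exact mem_ball.mpr (by linarith)

lemma measure_est (h : Hyp c v Q) (z : X) (T : ℝ) :
    c.μ (thickening 1 (c.Z ∩ ball z T))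
      ≤ ENNReal.ofReal c.ε * c.μ (thickening 1 (c.Y ∩ ball z (T + 5 * c.R))) := by
  set B : ℕ → Set X := fun k => c.A' k ∩ ball z T with hB
  set Dk : ℕ → Set X := fun k => if (B k).Nonempty then c.Cin k else ∅ with hD
  have h1 : c.Z ∩ ball z T ⊆ ⋃ k, B k := by
    rintro x ⟨hxZ, hxb⟩
    obtain ⟨k, hk⟩ := mem_iUnion.mp (Z_sub_A' h hxZ)
    exact mem_iUnion.mpr ⟨k, hk, hxb⟩
  have h2 : c.μ (thickening 1 (c.Z ∩ ball z T)) ≤ ∑' k, c.μ (thickening 1 (B k)) := by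
    calc c.μ (thickening 1 (c.Z ∩ ball z T)) ≤ c.μ (thickening 1 (⋃ k, B k)) :=
          measure_mono (thickening_subset_of_subset 1 h1)
      _ = c.μ (⋃ k, thickening 1 (B k)) := by rw [thickening_iUnion]
      _ ≤ ∑' k, c.μ (thickening 1 (B k)) := measure_iUnion_le _
  have h3 : ∀ k, c.μ (thickening 1 (B k)) ≤ ENNReal.ofReal c.ε * c.μ (thickening 1 (Dk k)) := by
    intro k
    by_cases hne : (B k).Nonempty
    · simp only [hD, if_pos hne]
      exact le_trans (measure_mono (thickening_subset_of_subset 1 inter_subset_left))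
        (A'_bound h k)
    · rw [not_nonempty_iff_eq_empty.mp hne]
      simp
  have h4 : ∑' k, c.μ (thickening 1 (B k))
      ≤ ENNReal.ofReal c.ε * ∑' k, c.μ (thickening 1 (Dk k)) := by
    rw [← ENNReal.tsum_mul_left]
    exact ENNReal.tsum_le_tsum h3
  have hDsub : ∀ k, thickening 1 (Dk k) ⊆ thickening 1 (c.Cin k) := by
    intro k
    apply thickening_subset_of_subset
    simp only [hD]
    split
    · exact Subset.rfl
    · exact empty_subset _
  have h5 : ∑' k, c.μ (thickening 1 (Dk k)) = c.μ (⋃ k, thickening 1 (Dk k)) := by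
    refine (measure_iUnion ?_ (fun k => isOpen_thickening.measurableSet)).symm
    intro k l hkl
    rcases lt_or_gt_of_ne hkl with hlt | hgt
    · exact Disjoint.mono (hDsub k) (hDsub l) (Cin_thick_disj h hlt)
    · exact (Disjoint.mono (hDsub l) (hDsub k) (Cin_thick_disj h hgt)).symm
  have h6 : (⋃ k, thickening 1 (Dk k)) ⊆ thickening 1 (c.Y ∩ ball z (T + 5 * c.R)) := by
    apply iUnion_subset
    intro k
    by_cases hne : (B k).Nonempty
    · simp only [hD, if_pos hne]
      apply thickening_subset_of_subset
      obtain ⟨q, hqA, hqb⟩ := hne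
      have hact : c.act (c.Yk k) k := by
        by_contra hna
        unfold A' at hqA
        rw [if_neg hna] at hqA
        exact hqA
      have hq1 : dist q (c.d k) < c.t (c.Yk k) k + c.w := by
        unfold A' at hqA
        rw [if_pos hact] at hqA
        exact mem_ball.mp hqA.2.1
      have hq2 : dist q z < T := mem_ball.mp hqb
      intro x hx
      have hx2 := Cin_sub k hx
      refine ⟨Yk_sub_Y _ hx2.1, mem_ball.mpr ?_⟩
      have h7 : dist x (c.d k) < c.t (c.Yk k) k - c.w - 2 := mem_ball.mp hx2.2
      have h8 := ht_ub h (c.Yk k) k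
      have h9 := hR0 h
      have hw := hw0 h
      have t1 := dist_triangle x (c.d k) z
      have t2 := dist_triangle (c.d k) q z
      have t3 : dist (c.d k) q = dist q (c.d k) := dist_comm _ _
      linarith
    · simp only [hD, if_neg hne, thickening_empty]
      exact empty_subset _
  calc c.μ (thickening 1 (c.Z ∩ ball z T)) ≤ ∑' k, c.μ (thickening 1 (B k)) := h2
    _ ≤ ENNReal.ofReal c.ε * ∑' k, c.μ (thickening 1 (Dk k)) := h4
    _ = ENNReal.ofReal c.ε * c.μ (⋃ k, thickening 1 (Dk k)) := by rw [h5]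
    _ ≤ ENNReal.ofReal c.ε * c.μ (thickening 1 (c.Y ∩ ball z (T + 5 * c.R))) :=
        mul_le_mul_right (measure_mono h6) _

lemma Z_empty (h : Hyp c v Q) (hsmall : c.ε * (v * Q) < v) : c.Z = ∅ := by
  by_contra hne
  obtain ⟨x, hx⟩ := nonempty_iff_ne_empty.mpr hne
  obtain ⟨k, hk⟩ := mem_iUnion.mp (Z_sub_A' h hx)
  have hball : ball x (1/2) ⊆ thickening 1 (c.A' k) :=
    Subset.trans (ball_subset_ball (by norm_num)) (ball_subset_thickening hk 1)
  have h1 : ENNReal.ofReal v ≤ c.μ (thickening 1 (c.A' k)) :=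
    le_trans (h.hvb x) (measure_mono hball)
  have h2 : c.μ (thickening 1 (c.A' k)) ≤ ENNReal.ofReal (c.ε * (v * Q)) := by
    calc c.μ (thickening 1 (c.A' k)) ≤ ENNReal.ofReal c.ε * c.μ (thickening 1 (c.Cin k)) :=
          A'_bound h k
      _ ≤ ENNReal.ofReal c.ε * ENNReal.ofReal (v * Q) := mul_le_mul_right (Cin_mass h k) _
      _ = ENNReal.ofReal (c.ε * (v * Q)) := (ENNReal.ofReal_mul (hε0 h)).symm
  have h3 : ENNReal.ofReal (c.ε * (v * Q)) < ENNReal.ofReal v :=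
    (ENNReal.ofReal_lt_ofReal_iff h.hv).mpr hsmall
  exact lt_irrefl _ (lt_of_le_of_lt (le_trans h1 h2) h3)


end Ctx

lemma exp_aux {x : ℝ} (h0 : 0 ≤ x) (h2 : x ≤ 1/2) : Real.exp x ≤ 1 + 2*x := by
  have h1 : (0:ℝ) < 1 - x := by linarith
  have h3 : 1 - x ≤ Real.exp (-x) := by linarith [Real.add_one_le_exp (-x)]
  have h4 : Real.exp (-x) * Real.exp x = 1 := by rw [← Real.exp_add]; simp
  have h5 : (1 - x) * Real.exp x ≤ 1 := by
    nlinarith [mul_le_mul_of_nonneg_right h3 (Real.exp_pos x).le]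
  nlinarith [Real.exp_pos x, sq_nonneg x]

lemma exists_R (n : ℕ) (w K₁ s : ℝ) (hw3 : 3 ≤ w) (hK₁ : 1 ≤ K₁) (hs0 : 0 < s)
    (hsn : s < (n:ℝ) + 1) :
    ∃ R : ℝ, 8*w ≤ R ∧ 1 ≤ R ∧
      12*w*(Real.log K₁ + s*Real.log R)/R ≤ 1/4 ∧
      (24*w*(Real.log K₁ + s*Real.log R)/R)^(n+1) * (K₁ * R^s) < 1 ∧
      0 ≤ Real.log K₁ + s*Real.log R := by
  have hw0 : 0 < w := by linarith
  have hlog0 : Tendsto (fun R : ℝ => Real.log R / R) atTop (𝓝 0) := by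
    simpa using Real.isLittleO_log_id_atTop.tendsto_div_nhds_zero
  have T1 : Tendsto (fun R : ℝ => 12*w*(Real.log K₁ + s*Real.log R)/R) atTop (𝓝 0) := by
    have e1 : Tendsto (fun R : ℝ => (12*w*Real.log K₁)/R) atTop (𝓝 0) :=
      tendsto_const_nhds.div_atTop tendsto_id
    have e2 : Tendsto (fun R : ℝ => (12*w*s)*(Real.log R/R)) atTop (𝓝 0) := by
      simpa using hlog0.const_mul (12*w*s)
    have e3 := e1.add e2
    simp only [add_zero] at e3
    exact Tendsto.congr (fun R => by ring) e3
  set γ := (((n:ℝ)+1) - s)/((n:ℝ)+1) with hγ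
  have hγ0 : 0 < γ := div_pos (by linarith) (by positivity)
  have base : Tendsto (fun R : ℝ => (Real.log K₁ + s*Real.log R)/R^γ) atTop (𝓝 0) := by
    have l1 : Tendsto (fun R : ℝ => Real.log K₁/R^γ) atTop (𝓝 0) :=
      tendsto_const_nhds.div_atTop (tendsto_rpow_atTop hγ0)
    have l2 : Tendsto (fun R : ℝ => s*(Real.log R/R^γ)) atTop (𝓝 0) := by
      simpa using ((isLittleO_log_rpow_atTop hγ0).tendsto_div_nhds_zero).const_mul s
    have l3 := l1.add l2
    simp only [add_zero] at l3
    exact Tendsto.congr (fun R => by ring) l3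
  have pows : Tendsto (fun R : ℝ => ((Real.log K₁ + s*Real.log R)/R^γ)^(n+1)) atTop (𝓝 0) := by
    have := base.pow (n+1)
    simpa using this
  have T2 : Tendsto (fun R : ℝ =>
      (24*w*(Real.log K₁ + s*Real.log R)/R)^(n+1) * (K₁*R^s)) atTop (𝓝 0) := by
    have final0 : Tendsto (fun R : ℝ =>
        ((24*w)^(n+1)*K₁) * ((Real.log K₁ + s*Real.log R)/R^γ)^(n+1)) atTop (𝓝 0) := by
      simpa using pows.const_mul ((24*w)^(n+1)*K₁)
    refine final0.congr' ?_
    filter_upwards [eventually_gt_atTop (0:ℝ)] with R hR0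
    have hRγ : (0:ℝ) < R^γ := Real.rpow_pos_of_pos hR0 γ
    have hRs : (0:ℝ) < R^s := Real.rpow_pos_of_pos hR0 s
    have e1 : (R^γ)^(n+1) = R^(((n:ℝ)+1) - s) := by
      rw [← Real.rpow_natCast (R^γ) (n+1), ← Real.rpow_mul hR0.le]
      congr 1
      rw [hγ]
      push_cast
      field_simp
    have e2 : R^(n+1) = R^s * R^(((n:ℝ)+1) - s) := by
      rw [← Real.rpow_natCast R (n+1), ← Real.rpow_add hR0]
      congr 1
      push_cast
      ring
    have e3 : (24*w*(Real.log K₁ + s*Real.log R))^(n+1)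
        = (24*w)^(n+1)*(Real.log K₁ + s*Real.log R)^(n+1) := mul_pow _ _ _
    rw [div_pow, div_pow, e1, e2, e3]
    have hne2 : R^(((n:ℝ)+1) - s) ≠ 0 := (Real.rpow_pos_of_pos hR0 _).ne'
    field_simp
  have E3 := T1.eventually_lt_const (by norm_num : (0:ℝ) < 1/4)
  have E4 := T2.eventually_lt_const (by norm_num : (0:ℝ) < 1)
  have E5 : ∀ᶠ R : ℝ in atTop, 0 ≤ Real.log K₁ + s*Real.log R := by
    filter_upwards [eventually_ge_atTop (1:ℝ)] with R hR1
    have l1 := Real.log_nonneg hK₁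
    have l2 := Real.log_nonneg hR1
    nlinarith
  obtain ⟨R, h1, h2, h3, h4, h5⟩ :=
    ((eventually_ge_atTop (8*w)).and ((eventually_ge_atTop (1:ℝ)).and
      (E3.and (E4.and E5)))).exists
  exact ⟨R, h1, h2, h3.le, h4, h5⟩

end PolyGrowthAsdim


open PolyGrowthAsdim

/-- A proper metric measure space that is volume noncollapsed
(`inf_x μ(B_{1/2}(x)) > 0`) and has finite polynomial volume growth rate
`ρ = limsup_{r→∞} log V(r) / log (r+1)` (with `V(r) = sup_x μ(B_r(x))`) has asymptotic
dimension at most `⌊ρ⌋`: for every `r > 0` there are `⌊ρ⌋ + 1` families of subsets,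
each `r`-disjoint and uniformly bounded, covering `X`. -/
theorem asdim_le_poly_growth_rate {X : Type*} [MetricSpace X] [ProperSpace X]
    [CompleteSpace X] [TopologicalSpace.SeparableSpace X]
    [MeasurableSpace X] [BorelSpace X] (μ : Measure X)
    (hsupp : ∀ (x : X) (ρ : ℝ), 0 < ρ → 0 < μ (ball x ρ))
    (hnontriv : ∃ (x : X) (ρ : ℝ), 0 < ρ ∧ 0 < μ (ball x ρ) ∧ μ (ball x ρ) < ⊤)
    (hnc : ∃ v : ℝ, 0 < v ∧ ∀ x : X, ENNReal.ofReal v ≤ μ (ball x (1 / 2)))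
    (hfin : ∀ R : ℝ, (⨆ x : X, μ (ball x R)) ≠ ⊤)
    (ρ : ℝ)
    (hbdd : IsBoundedUnder (· ≤ ·) atTop
      (fun R : ℝ => Real.log (⨆ x : X, μ (ball x R)).toReal / Real.log (R + 1)))
    (hρ : limsup (fun R : ℝ => Real.log (⨆ x : X, μ (ball x R)).toReal / Real.log (R + 1))
      atTop = ρ) :
    ∀ r : ℝ, 0 < r → ∃ (D : ℝ) (U : Fin (⌊ρ⌋₊ + 1) → Set (Set X)),
      (∀ i, ∀ A ∈ U i, ∀ B ∈ U i, A ≠ B → ∀ a ∈ A, ∀ b ∈ B, r < dist a b) ∧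
      (∀ i, ∀ A ∈ U i, ∀ a ∈ A, ∀ b ∈ A, dist a b ≤ D) ∧
      (∀ x : X, ∃ i, ∃ A ∈ U i, x ∈ A) := by
  intro r hr
  rcases isEmpty_or_nonempty X with hX | hX
  · refine ⟨0, fun _ => ∅, ?_, ?_, ?_⟩
    · intro i A hA
      exact absurd hA (notMem_empty A)
    · intro i A hA
      exact absurd hA (notMem_empty A)
    · intro x
      exact (IsEmpty.false x).elim
  obtain ⟨v, hv, hvb⟩ := hnc
  haveI := hX
  obtain ⟨d, hd⟩ := TopologicalSpace.exists_dense_seq X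
  set n := ⌊ρ⌋₊ with hn
  have hρn : ρ < (n:ℝ) + 1 := by
    have := Nat.lt_floor_add_one ρ
    rw [hn]
    exact_mod_cast this
  clear_value n
  set s : ℝ := max ((ρ + ((n:ℝ) + 1)) / 2) (1/2) with hs
  have hs0 : 0 < s := lt_of_lt_of_le (by norm_num) (le_max_right _ _)
  have hsn : s < (n:ℝ) + 1 := by
    apply max_lt
    · linarith
    · have : (0:ℝ) ≤ (n:ℝ) := Nat.cast_nonneg n
      linarith
  have hρs : ρ < s := lt_of_lt_of_le (by linarith) (le_max_left _ _)
  clear_value s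
  -- the eventual polynomial bound on the volume function
  have hev : ∀ᶠ T in atTop,
      Real.log (⨆ x : X, μ (ball x T)).toReal / Real.log (T + 1) < s :=
    Filter.eventually_lt_of_limsup_lt (by rw [hρ]; exact hρs) hbdd
  obtain ⟨R₀', hR₀'⟩ := eventually_atTop.mp hev
  set R₁ : ℝ := max R₀' 1 with hR₁
  have h1R₁ : 1 ≤ R₁ := le_max_right _ _
  have hR₀R₁ : R₀' ≤ R₁ := le_max_left _ _
  clear_value R₁
  set cst : ℝ := max (⨆ x : X, μ (ball x R₁)).toReal 1 with hcst
  have hc1 : 1 ≤ cst := le_max_right _ _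
  have hcstV : (⨆ x : X, μ (ball x R₁)).toReal ≤ cst := le_max_left _ _
  clear_value cst
  have hVmono : ∀ T₁ T₂ : ℝ, T₁ ≤ T₂ →
      (⨆ x : X, μ (ball x T₁)) ≤ ⨆ x : X, μ (ball x T₂) :=
    fun T₁ T₂ hT => iSup_mono (fun x => measure_mono (ball_subset_ball hT))
  have hV : ∀ T : ℝ, 0 ≤ T →
      (⨆ x : X, μ (ball x T)) ≤ ENNReal.ofReal (cst * (T + 1) ^ s) := by
    intro T hT
    have hT1 : (1:ℝ) ≤ T + 1 := by linarith
    have hrp1 : (1:ℝ) ≤ (T + 1) ^ s := Real.one_le_rpow hT1 hs0.le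
    rcases le_or_gt T R₁ with hle | hlt
    · calc (⨆ x : X, μ (ball x T)) ≤ ⨆ x : X, μ (ball x R₁) := hVmono _ _ hle
        _ = ENNReal.ofReal (⨆ x : X, μ (ball x R₁)).toReal :=
            (ENNReal.ofReal_toReal (hfin R₁)).symm
        _ ≤ ENNReal.ofReal (cst * (T + 1) ^ s) := by
            apply ENNReal.ofReal_le_ofReal
            have h1 : (⨆ x : X, μ (ball x R₁)).toReal ≤ cst := hcstV
            nlinarith
    · have hTR₀ : R₀' ≤ T := le_trans hR₀R₁ hlt.le
      have hflt := hR₀' T hTR₀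
      have h1T : (1:ℝ) < T := lt_of_le_of_lt h1R₁ hlt
      have hlog : 0 < Real.log (T + 1) := Real.log_pos (by linarith)
      have hVpos : 0 < (⨆ x : X, μ (ball x T)).toReal := by
        have x₀ : X := hX.some
        have hle2 : ENNReal.ofReal v ≤ ⨆ x : X, μ (ball x T) :=
          le_trans (le_trans (hvb x₀) (measure_mono (ball_subset_ball (by linarith))))
            (le_iSup (fun x => μ (ball x T)) x₀)
        have hpos : (0:ℝ≥0∞) < ⨆ x : X, μ (ball x T) :=
          lt_of_lt_of_le (ENNReal.ofReal_pos.mpr hv) hle2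
        exact ENNReal.toReal_pos hpos.ne' (hfin T)
      have h2 : Real.log (⨆ x : X, μ (ball x T)).toReal < s * Real.log (T + 1) := by
        rwa [div_lt_iff₀ hlog] at hflt
      have h3 : (⨆ x : X, μ (ball x T)).toReal ≤ (T + 1) ^ s := by
        rw [← Real.exp_log hVpos, Real.rpow_def_of_pos (by linarith : (0:ℝ) < T + 1)]
        exact Real.exp_le_exp.mpr (by rw [mul_comm]; exact h2.le)
      calc (⨆ x : X, μ (ball x T))
          = ENNReal.ofReal (⨆ x : X, μ (ball x T)).toReal := (ENNReal.ofReal_toReal (hfin T)).symm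
        _ ≤ ENNReal.ofReal (cst * (T + 1) ^ s) := ENNReal.ofReal_le_ofReal (by nlinarith)
  -- parameters
  set r' : ℝ := max r 1 with hr'
  have hr'1 : 1 ≤ r' := le_max_right _ _
  have hrr' : r ≤ r' := le_max_left _ _
  clear_value r'
  set w : ℝ := r' + 2 with hwdef
  have hw3' : 3 ≤ w := by rw [hwdef]; linarith
  have hw0' : 0 < w := by linarith
  clear_value w
  set K₁ : ℝ := cst * (5*(n:ℝ)+10)^s / v + 1 with hK₁def
  have hK₁1 : 1 ≤ K₁ := by
    have h1 : 0 ≤ cst * (5*(n:ℝ)+10)^s / v :=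
      div_nonneg (mul_nonneg (by linarith) (Real.rpow_nonneg (by positivity) s)) hv.le
    rw [hK₁def]
    linarith
  clear_value K₁
  obtain ⟨R, hRw, hR1, hcond1, hcond2, hlognn⟩ := exists_R n w K₁ s hw3' hK₁1 hs0 hsn
  have hR0 : (0:ℝ) < R := by linarith
  set M : ℕ := ⌊(R - w)/(3*w)⌋₊ with hM
  clear_value M
  set Q₀ : ℝ := max (cst * ((5*(n:ℝ)+10)*R)^s / v) 1 with hQ₀
  have hQ₀1 : 1 ≤ Q₀ := le_max_right _ _
  have hQ₀0 : 0 < Q₀ := by linarith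
  have hQ₀ge : cst * ((5*(n:ℝ)+10)*R)^s / v ≤ Q₀ := le_max_left _ _
  have hQ₀K : Q₀ ≤ K₁ * R^s := by
    apply max_le
    · have e : cst * ((5*(n:ℝ)+10)*R)^s / v = (cst * (5*(n:ℝ)+10)^s / v) * R^s := by
        rw [Real.mul_rpow (by positivity) hR0.le]
        ring
      rw [e]
      have h1 : cst * (5*(n:ℝ)+10)^s / v ≤ K₁ := by rw [hK₁def]; linarith
      exact mul_le_mul_of_nonneg_right h1 (Real.rpow_nonneg hR0.le s)
    · have h1 : (1:ℝ) ≤ R^s := Real.one_le_rpow hR1 hs0.le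
      nlinarith
  clear_value Q₀
  set ε' : ℝ := Q₀ ^ ((M:ℝ))⁻¹ - 1 with hε'
  clear_value ε'
  have hMlb : R/(12*w) ≤ (M:ℝ) := by
    have hfl : (R - w)/(3*w) < (M:ℝ) + 1 := by
      rw [hM]
      exact_mod_cast Nat.lt_floor_add_one ((R - w)/(3*w))
    have e : (R - w)/(3*w) - 1 = (R - 4*w)/(3*w) := by field_simp; ring
    have key2 : R/(12*w) ≤ (R - w)/(3*w) - 1 := by
      rw [e, div_le_div_iff₀ (by linarith : (0:ℝ) < 12*w) (by linarith : (0:ℝ) < 3*w)]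
      nlinarith
    linarith
  have hM0' : 0 < (M:ℝ) := lt_of_lt_of_le (div_pos hR0 (by linarith)) hMlb
  have hMinv : ((M:ℝ))⁻¹ ≤ 12*w/R := by
    have h1 : 0 < R/(12*w) := div_pos hR0 (by linarith)
    calc ((M:ℝ))⁻¹ ≤ (R/(12*w))⁻¹ := inv_anti₀ h1 hMlb
      _ = 12*w/R := by rw [inv_div]
  have hlogQ₀ : Real.log Q₀ ≤ Real.log K₁ + s*Real.log R := by
    have h1 : Real.log Q₀ ≤ Real.log (K₁ * R^s) :=
      (Real.log_le_log_iff hQ₀0 (mul_pos (by linarith) (Real.rpow_pos_of_pos hR0 s))).mpr hQ₀K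
    rwa [Real.log_mul (by linarith : (0:ℝ) < K₁).ne' (Real.rpow_pos_of_pos hR0 s).ne',
      Real.log_rpow hR0] at h1
  have hlogQ₀0 : 0 ≤ Real.log Q₀ := Real.log_nonneg hQ₀1
  have hx0 : 0 ≤ Real.log Q₀ * ((M:ℝ))⁻¹ := mul_nonneg hlogQ₀0 (by positivity)
  have hxle : Real.log Q₀ * ((M:ℝ))⁻¹ ≤ (Real.log K₁ + s*Real.log R) * (12*w/R) :=
    mul_le_mul hlogQ₀ hMinv (by positivity) hlognn
  have hx14 : Real.log Q₀ * ((M:ℝ))⁻¹ ≤ 1/4 := by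
    calc Real.log Q₀ * ((M:ℝ))⁻¹ ≤ (Real.log K₁ + s*Real.log R) * (12*w/R) := hxle
      _ = 12*w*(Real.log K₁ + s*Real.log R)/R := by ring
      _ ≤ 1/4 := hcond1
  have hεexp : Q₀ ^ ((M:ℝ))⁻¹ = Real.exp (Real.log Q₀ * ((M:ℝ))⁻¹) :=
    Real.rpow_def_of_pos hQ₀0 _
  have hε'2x : ε' ≤ 2*(Real.log Q₀ * ((M:ℝ))⁻¹) := by
    rw [hε', hεexp]
    have := exp_aux hx0 (by linarith)
    linarith
  have hε'0 : 0 ≤ ε' := by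
    rw [hε', hεexp]
    have : 1 ≤ Real.exp (Real.log Q₀ * ((M:ℝ))⁻¹) := Real.one_le_exp hx0
    linarith
  have hε'half : ε' ≤ 1/2 := by linarith
  have hfinal : ε'^(n+1) * Q₀ < 1 := by
    have hq : 0 ≤ 24*w*(Real.log K₁ + s*Real.log R)/R :=
      div_nonneg (mul_nonneg (by linarith) hlognn) hR0.le
    have h1 : ε'^(n+1) ≤ (24*w*(Real.log K₁ + s*Real.log R)/R)^(n+1) := by
      apply pow_le_pow_left₀ hε'0
      calc ε' ≤ 2*(Real.log Q₀ * ((M:ℝ))⁻¹) := hε'2x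
        _ ≤ 2*((Real.log K₁ + s*Real.log R) * (12*w/R)) := by linarith
        _ = 24*w*(Real.log K₁ + s*Real.log R)/R := by ring
    have h2 : ε'^(n+1) * Q₀ ≤ (24*w*(Real.log K₁ + s*Real.log R)/R)^(n+1) * (K₁*R^s) :=
      mul_le_mul h1 hQ₀K (by linarith) (pow_nonneg hq _)
    exact lt_of_le_of_lt h2 hcond2
  have hVQ₀ : cst * ((5*(n:ℝ)+10)*R)^s ≤ v * Q₀ := by
    have h1 : cst * ((5*(n:ℝ)+10)*R)^s / v ≤ Q₀ := hQ₀ge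
    have h2 : v * (cst * ((5*(n:ℝ)+10)*R)^s / v) = cst * ((5*(n:ℝ)+10)*R)^s := by
      field_simp
    calc cst * ((5*(n:ℝ)+10)*R)^s = v * (cst * ((5*(n:ℝ)+10)*R)^s / v) := h2.symm
      _ ≤ v * Q₀ := mul_le_mul_of_nonneg_left h1 hv.le
  set ρf : ℕ → ℝ := fun i => R * (3 + 5*(((n+1-i : ℕ)):ℝ)) with hρf
  clear_value ρf
  have hρf0 : ∀ i, 3*R ≤ ρf i := by
    intro i
    have h1 : (0:ℝ) ≤ ((n+1-i:ℕ):ℝ) := Nat.cast_nonneg _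
    simp only [hρf]
    nlinarith
  have hρfnn : ∀ i, 0 ≤ ρf i := fun i => le_trans (by linarith) (hρf0 i)
  have hρfstep : ∀ i, i ≤ n → ρf (i+1) + 5*R = ρf i := by
    intro i hi
    have e : (n+1-i : ℕ) = (n+1-(i+1)) + 1 := by omega
    simp only [hρf]
    rw [e]
    push_cast
    ring
  have hρftop : ρf 0 + 2 ≤ (5*(n:ℝ)+10)*R := by
    have e : (n+1-0 : ℕ) = n+1 := by omega
    simp only [hρf]
    rw [e]
    push_cast
    nlinarith
  -- building one `Hyp` instance per stage
  have mkHyp : ∀ (Y' : Set X) (Qi : ℝ), 1 ≤ Qi →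
      (∀ z : X, μ (thickening 1 (Y' ∩ ball z (3*R))) ≤ ENNReal.ofReal (v*Qi)) →
      Ctx.Hyp (⟨μ, d, Y', r', R, Qi ^ ((M:ℝ))⁻¹ - 1, M⟩ : Ctx X) v Qi := by
    intro Y' Qi h1 h2
    refine ⟨hr'1, ?_, ?_, h1, rfl, hv, hvb, hd, h2⟩
    · show 8 * (r' + 2) ≤ R
      rw [← hwdef]
      exact hRw
    · show M = ⌊(R - (r' + 2))/(3*(r' + 2))⌋₊
      rw [← hwdef]
      exact hM
  have hεile : ∀ Qi : ℝ, 1 ≤ Qi → Qi ≤ Q₀ → Qi ^ ((M:ℝ))⁻¹ - 1 ≤ ε' := by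
    intro Qi h1 h2
    rw [hε']
    have := Real.rpow_le_rpow (le_trans zero_le_one h1) h2
      (by positivity : (0:ℝ) ≤ ((M:ℝ))⁻¹)
    linarith
  have hεi0 : ∀ Qi : ℝ, 1 ≤ Qi → 0 ≤ Qi ^ ((M:ℝ))⁻¹ - 1 := by
    intro Qi h1
    have := Real.one_le_rpow h1 (by positivity : (0:ℝ) ≤ ((M:ℝ))⁻¹)
    linarith
  have hQile : ∀ i : ℕ, Q₀ * ε'^i ≤ Q₀ := by
    intro i
    have h1 : ε'^i ≤ 1 := pow_le_one₀ hε'0 (by linarith)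
    nlinarith
  have hε'pnn : ∀ i : ℕ, 0 ≤ ε'^i := fun i => pow_nonneg hε'0 i
  -- the main induction
  have key : ∀ i : ℕ, i ≤ n → ∃ (Z : Set X) (F : Fin i → ℕ → Set X),
      (∀ z : X, μ (thickening 1 (Z ∩ ball z (ρf i))) ≤ ENNReal.ofReal (v * (Q₀ * ε'^i))) ∧
      (univ ⊆ Z ∪ ⋃ (a : Fin i), ⋃ k, F a k) ∧
      (∀ (a : Fin i) (k l : ℕ), k ≠ l → ∀ x₁ ∈ F a k, ∀ x₂ ∈ F a l, r' < dist x₁ x₂) ∧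
      (∀ (a : Fin i) (k : ℕ), ∀ x₁ ∈ F a k, ∀ x₂ ∈ F a k, dist x₁ x₂ ≤ 4*R) := by
    intro i
    induction i with
    | zero =>
      intro _
      refine ⟨univ, Fin.elim0, ?_, subset_union_left, fun a => a.elim0, fun a => a.elim0⟩
      intro z
      have hsub : thickening 1 (univ ∩ ball z (ρf 0)) ⊆ ball z (ρf 0 + 1) := by
        intro u hu
        obtain ⟨q, hq, hdq⟩ := mem_thickening_iff.mp hu
        have hq2 : dist q z < ρf 0 := mem_ball.mp hq.2
        have := dist_triangle u q z
        exact mem_ball.mpr (by linarith)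
      calc μ (thickening 1 (univ ∩ ball z (ρf 0))) ≤ μ (ball z (ρf 0 + 1)) :=
            measure_mono hsub
        _ ≤ ⨆ x : X, μ (ball x (ρf 0 + 1)) := le_iSup (fun x => μ (ball x (ρf 0 + 1))) z
        _ ≤ ENNReal.ofReal (cst * ((ρf 0 + 1) + 1)^s) := hV _ (by linarith [hρfnn 0])
        _ ≤ ENNReal.ofReal (v * (Q₀ * ε'^0)) := by
            apply ENNReal.ofReal_le_ofReal
            rw [pow_zero, mul_one]
            have h1 : (ρf 0 + 1) + 1 ≤ (5*(n:ℝ)+10)*R := by linarith [hρftop]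
            have h2 : cst * ((ρf 0 + 1) + 1)^s ≤ cst * ((5*(n:ℝ)+10)*R)^s :=
              mul_le_mul_of_nonneg_left
                (Real.rpow_le_rpow (by linarith [hρfnn 0]) h1 hs0.le) (by linarith)
            linarith [hVQ₀]
    | succ i ih =>
      intro hsucc
      have hi : i ≤ n := le_trans (Nat.le_succ i) hsucc
      obtain ⟨Z, F, hZb, hcov, hsep, hbd⟩ := ih hi
      set Qi : ℝ := max (Q₀ * ε'^i) 1 with hQi
      have hQi1 : 1 ≤ Qi := le_max_right _ _
      have hQige : Q₀ * ε'^i ≤ Qi := le_max_left _ _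
      have hQiup : Qi ≤ Q₀ := max_le (hQile i) hQ₀1
      clear_value Qi
      set c : Ctx X := ⟨μ, d, Z, r', R, Qi ^ ((M:ℝ))⁻¹ - 1, M⟩ with hcdef
      have hQib : ∀ z : X, μ (thickening 1 (Z ∩ ball z (3*R))) ≤ ENNReal.ofReal (v*Qi) := by
        intro z
        calc μ (thickening 1 (Z ∩ ball z (3*R)))
            ≤ μ (thickening 1 (Z ∩ ball z (ρf i))) :=
              measure_mono (thickening_subset_of_subset 1
                (inter_subset_inter Subset.rfl (ball_subset_ball (hρf0 i))))
          _ ≤ ENNReal.ofReal (v * (Q₀ * ε'^i)) := hZb z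
          _ ≤ ENNReal.ofReal (v * Qi) :=
              ENNReal.ofReal_le_ofReal (mul_le_mul_of_nonneg_left hQige hv.le)
      have h := mkHyp Z Qi hQi1 hQib
      refine ⟨c.Z, Fin.snoc F (fun k => c.P k), ?_, ?_, ?_, ?_⟩
      · intro z
        have hest := Ctx.measure_est h z (ρf (i+1))
        calc μ (thickening 1 (c.Z ∩ ball z (ρf (i+1))))
            ≤ ENNReal.ofReal (Qi ^ ((M:ℝ))⁻¹ - 1)
              * μ (thickening 1 (Z ∩ ball z (ρf (i+1) + 5*R))) := hest
          _ = ENNReal.ofReal (Qi ^ ((M:ℝ))⁻¹ - 1)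
              * μ (thickening 1 (Z ∩ ball z (ρf i))) := by rw [hρfstep i hi]
          _ ≤ ENNReal.ofReal (Qi ^ ((M:ℝ))⁻¹ - 1) * ENNReal.ofReal (v * (Q₀ * ε'^i)) :=
              mul_le_mul_right (hZb z) _
          _ ≤ ENNReal.ofReal (v * (Q₀ * ε'^(i+1))) := by
              rw [← ENNReal.ofReal_mul (hεi0 Qi hQi1)]
              apply ENNReal.ofReal_le_ofReal
              have h1 : Qi ^ ((M:ℝ))⁻¹ - 1 ≤ ε' := hεile Qi hQi1 hQiup
              have h2 : 0 ≤ v * (Q₀ * ε'^i) :=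
                mul_nonneg hv.le (mul_nonneg (by linarith) (hε'pnn i))
              calc (Qi ^ ((M:ℝ))⁻¹ - 1) * (v * (Q₀ * ε'^i))
                  ≤ ε' * (v * (Q₀ * ε'^i)) := mul_le_mul_of_nonneg_right h1 h2
                _ = v * (Q₀ * ε'^(i+1)) := by rw [pow_succ]; ring
      · intro x hx
        rcases hcov hx with hxZ | hxF
        · rcases Ctx.Y_sub_ZP (c := c) hxZ with hz | hp
          · exact Or.inl hz
          · obtain ⟨k, hk⟩ := mem_iUnion.mp hp
            refine Or.inr (mem_iUnion.mpr ⟨Fin.last i, mem_iUnion.mpr ⟨k, ?_⟩⟩)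
            rw [Fin.snoc_last]
            exact hk
        · obtain ⟨a, ha⟩ := mem_iUnion.mp hxF
          obtain ⟨k, hk⟩ := mem_iUnion.mp ha
          refine Or.inr (mem_iUnion.mpr ⟨a.castSucc, mem_iUnion.mpr ⟨k, ?_⟩⟩)
          rw [Fin.snoc_castSucc]
          exact hk
      · intro a
        induction a using Fin.lastCases with
        | last =>
          simp only [Fin.snoc_last]
          exact fun k l hkl => Ctx.P_sep (c := c) k l hkl
        | cast a' =>
          simp only [Fin.snoc_castSucc]
          exact hsep a'
      · intro a
        induction a using Fin.lastCases with
        | last =>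
          simp only [Fin.snoc_last]
          exact fun k => Ctx.P_bdd h k
        | cast a' =>
          simp only [Fin.snoc_castSucc]
          exact hbd a'
  -- final stage: one more application of the construction; the leftover is empty
  obtain ⟨Z, F, hZb, hcov, hsep, hbd⟩ := key n le_rfl
  set Qn : ℝ := max (Q₀ * ε'^n) 1 with hQn
  have hQn1 : 1 ≤ Qn := le_max_right _ _
  have hQnge : Q₀ * ε'^n ≤ Qn := le_max_left _ _
  have hQnup : Qn ≤ Q₀ := max_le (hQile n) hQ₀1
  clear_value Qn
  set c : Ctx X := ⟨μ, d, Z, r', R, Qn ^ ((M:ℝ))⁻¹ - 1, M⟩ with hcdef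
  have hQnb : ∀ z : X, μ (thickening 1 (Z ∩ ball z (3*R))) ≤ ENNReal.ofReal (v*Qn) := by
    intro z
    calc μ (thickening 1 (Z ∩ ball z (3*R)))
        ≤ μ (thickening 1 (Z ∩ ball z (ρf n))) :=
          measure_mono (thickening_subset_of_subset 1
            (inter_subset_inter Subset.rfl (ball_subset_ball (hρf0 n))))
      _ ≤ ENNReal.ofReal (v * (Q₀ * ε'^n)) := hZb z
      _ ≤ ENNReal.ofReal (v * Qn) :=
          ENNReal.ofReal_le_ofReal (mul_le_mul_of_nonneg_left hQnge hv.le)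
  have h := mkHyp Z Qn hQn1 hQnb
  have hεn : Qn ^ ((M:ℝ))⁻¹ - 1 ≤ ε' := hεile Qn hQn1 hQnup
  have hεQn : ε' * Qn < 1 := by
    rcases max_cases (Q₀ * ε'^n) 1 with ⟨he, _⟩ | ⟨he, _⟩
    · rw [hQn, he]
      calc ε' * (Q₀ * ε'^n) = ε'^(n+1) * Q₀ := by rw [pow_succ]; ring
        _ < 1 := hfinal
    · rw [hQn, he, mul_one]
      linarith
  have hsmall : (Qn ^ ((M:ℝ))⁻¹ - 1) * (v * Qn) < v := by
    calc (Qn ^ ((M:ℝ))⁻¹ - 1) * (v * Qn) ≤ ε' * (v * Qn) :=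
          mul_le_mul_of_nonneg_right hεn (mul_nonneg hv.le (by linarith))
      _ = v * (ε' * Qn) := by ring
      _ < v * 1 := mul_lt_mul_of_pos_left hεQn hv
      _ = v := mul_one v
  have hZempty : c.Z = ∅ := Ctx.Z_empty h hsmall
  set G : Fin (n+1) → ℕ → Set X := Fin.snoc F (fun k => c.P k) with hG
  have hGsep : ∀ (a : Fin (n+1)) (k l : ℕ), k ≠ l →
      ∀ x₁ ∈ G a k, ∀ x₂ ∈ G a l, r' < dist x₁ x₂ := by
    intro a
    induction a using Fin.lastCases with
    | last =>
      simp only [hG, Fin.snoc_last]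
      exact fun k l hkl => Ctx.P_sep (c := c) k l hkl
    | cast a' =>
      simp only [hG, Fin.snoc_castSucc]
      exact hsep a'
  have hGbdd : ∀ (a : Fin (n+1)) (k : ℕ), ∀ x₁ ∈ G a k, ∀ x₂ ∈ G a k,
      dist x₁ x₂ ≤ 4*R := by
    intro a
    induction a using Fin.lastCases with
    | last =>
      simp only [hG, Fin.snoc_last]
      exact fun k => Ctx.P_bdd h k
    | cast a' =>
      simp only [hG, Fin.snoc_castSucc]
      exact hbd a'
  have hGcov : ∀ x : X, ∃ (a : Fin (n+1)) (k : ℕ), x ∈ G a k := by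
    intro x
    rcases hcov (mem_univ x) with hxZ | hxF
    · rcases Ctx.Y_sub_ZP (c := c) hxZ with hz | hp
      · rw [hZempty] at hz
        exact absurd hz (notMem_empty x)
      · obtain ⟨k, hk⟩ := mem_iUnion.mp hp
        refine ⟨Fin.last n, k, ?_⟩
        rw [hG, Fin.snoc_last]
        exact hk
    · obtain ⟨a, ha⟩ := mem_iUnion.mp hxF
      obtain ⟨k, hk⟩ := mem_iUnion.mp ha
      refine ⟨a.castSucc, k, ?_⟩
      rw [hG, Fin.snoc_castSucc]
      exact hk
  refine ⟨4*R, fun a => Set.range (G a), ?_, ?_, ?_⟩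
  · rintro i A ⟨k, rfl⟩ B ⟨l, rfl⟩ hAB a ha b hb
    have hkl : k ≠ l := fun he => hAB (by rw [he])
    exact lt_of_le_of_lt hrr' (hGsep i k l hkl a ha b hb)
  · rintro i A ⟨k, rfl⟩ a ha b hb
    exact hGbdd i k a ha b hb
  · intro x
    obtain ⟨a, k, hk⟩ := hGcov x
    exact ⟨a, G a k, ⟨k, rfl⟩, hk⟩
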